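/- For every integer r ≥ 1 and all non-negative integers k₁,…,k_r, the normalized multiple Bernoulli polynomials satisfy, as an identity in ℚ[z], the difference equation ζ(−k₁,…,−k_r|z+1) − ζ(−k₁,…,−k_r|z) = −z^{k₁} · ζ(−k₂,…,−k_r|z+1), where for r = 1 the right-hand side is −z^{k₁} (convention: ζ of the empty tuple is the constant polynomial 1). -/

import Mathlib

open Polynomial

/-- Auxiliary: normalized multiple Bernoulli polynomial of the reversed tuple,
defined by the recursion of the paper (acting on the last two entries, which are
at the front of the reversed list). -/
noncomputable def nmbpRev : List ℕ → ℚ[X]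
  | [] => 1
  | [k] => -(C ((k + 1 : ℚ)⁻¹)) * Polynomial.bernoulli (k + 1)
  | kr :: km :: rest =>
      -(C ((kr + 1 : ℚ)⁻¹)) * nmbpRev ((km + kr + 1) :: rest)
        - C (1 / 2 : ℚ) * nmbpRev ((km + kr) :: rest)
        + ∑ q ∈ Finset.Icc 1 kr,
            C ((ascPochhammer ℚ q).eval (-(kr : ℚ))
                * _root_.bernoulli (q + 1) / ((q + 1).factorial : ℚ)) *
              nmbpRev ((km + kr - q) :: rest)
  termination_by l => l.length
  decreasing_by all_goals simp

/-- The normalized multiple Bernoulli polynomial `ζ(−k₁,…,−k_r|z) ∈ ℚ[z]`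
(the empty tuple gives the constant polynomial `1`). -/
noncomputable def nmbp (l : List ℕ) : ℚ[X] := nmbpRev l.reverse

open Finset in
lemma coef_eq (n q : ℕ) (h1 : 1 ≤ q) (h2 : q ≤ n) :
    (ascPochhammer ℚ q).eval (-(n : ℚ)) * _root_.bernoulli (q + 1) / ((q + 1).factorial : ℚ)
      = -(_root_.bernoulli (q + 1) * ((n + 1).choose (q + 1) : ℚ) / ((n : ℚ) + 1)) := by
  rcases Nat.even_or_odd q with he | ho
  · obtain ⟨m, rfl⟩ := he
    have hb : _root_.bernoulli (m + m + 1) = 0 := by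
      rw [bernoulli_eq_bernoulli'_of_ne_one (by omega)]
      exact bernoulli'_eq_zero_of_odd ⟨m, by omega⟩ (by omega)
    simp [hb]
  · rw [ascPochhammer_eval_neg_eq_descPochhammer, descPochhammer_eval_eq_descFactorial,
      ho.neg_one_pow]
    have key : (n + 1) * n.descFactorial q = (n + 1).choose (q + 1) * (q + 1).factorial := by
      rw [← Nat.succ_descFactorial_succ, Nat.descFactorial_eq_factorial_mul_choose, mul_comm]
    have keyQ : ((n : ℚ) + 1) * (n.descFactorial q : ℚ)
        = ((n + 1).choose (q + 1) : ℚ) * ((q + 1).factorial : ℚ) := by exact_mod_cast key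
    have hf : ((q + 1).factorial : ℚ) ≠ 0 := by positivity
    have hn : ((n : ℚ) + 1) ≠ 0 := by positivity
    field_simp
    linear_combination (-_root_.bernoulli (q + 1)) * keyQ

lemma baseDelta (k : ℕ) (x : ℚ) :
    (nmbpRev [k]).eval (x + 1) - (nmbpRev [k]).eval x = -(x ^ k) := by
  rw [nmbpRev]
  have h := Polynomial.bernoulli_eval_one_add (k + 1) x
  have hk : ((k : ℚ) + 1) ≠ 0 := by positivity
  simp only [eval_mul, eval_neg, eval_C, add_comm x 1, h, Nat.cast_add, Nat.cast_one,
    Nat.add_sub_cancel]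
  field_simp
  ring

open Finset in
lemma bern_expand (n : ℕ) (x : ℚ) :
    (Polynomial.bernoulli (n + 1)).eval x
      = x ^ (n + 1) + (-(1/2)) * ((n : ℚ) + 1) * x ^ n
        + ∑ j ∈ range n,
            _root_.bernoulli (j + 2) * ((n + 1).choose (j + 2) : ℚ) * x ^ (n - 1 - j) := by
  have : (Polynomial.bernoulli (n + 1)).eval x
      = ∑ i ∈ range (n + 2), _root_.bernoulli i * ((n + 1).choose i : ℚ) * x ^ (n + 1 - i) := by
    simp [Polynomial.bernoulli, eval_finset_sum, eval_monomial]
  rw [this, Finset.sum_range_succ', Finset.sum_range_succ']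
  have e0 : ∀ j ∈ range n,
      _root_.bernoulli (j + 1 + 1) * ((n + 1).choose (j + 1 + 1) : ℚ) * x ^ (n + 1 - (j + 1 + 1))
        = _root_.bernoulli (j + 2) * ((n + 1).choose (j + 2) : ℚ) * x ^ (n - 1 - j) := by
    intro j hj
    have h1 : n + 1 - (j + 1 + 1) = n - 1 - j := by omega
    have h2 : j + 1 + 1 = j + 2 := by omega
    rw [h1, h2]
  rw [Finset.sum_congr rfl e0]
  simp only [zero_add, Nat.add_sub_cancel, Nat.sub_zero, _root_.bernoulli_zero,
    _root_.bernoulli_one, Nat.choose_zero_right, Nat.choose_one_right, Nat.cast_add, Nat.cast_one]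
  ring

open Finset in
lemma single_expand (n : ℕ) (x : ℚ) :
    (nmbpRev [n]).eval (x + 1)
      = -(((n : ℚ) + 1)⁻¹ * (x ^ (n + 1)
          + ∑ j ∈ range n,
            _root_.bernoulli (j + 2) * ((n + 1).choose (j + 2) : ℚ) * x ^ (n - 1 - j)))
        - (1/2) * x ^ n := by
  rw [nmbpRev]
  have h := Polynomial.bernoulli_eval_one_add (n + 1) x
  rw [add_comm 1 x] at h
  have hn : ((n : ℚ) + 1) ≠ 0 := by positivity
  simp only [eval_mul, eval_neg, eval_C, h, Nat.cast_add, Nat.cast_one, Nat.add_sub_cancel,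
    bern_expand]
  field_simp
  ring

open Finset in
lemma stepTwo (n k₁ : ℕ) (x : ℚ) :
    (nmbpRev [n, k₁]).eval (x + 1) - (nmbpRev [n, k₁]).eval x
      = -(x ^ k₁) * (nmbpRev [n]).eval (x + 1) := by
  have hA := baseDelta (k₁ + n + 1) x
  have hB := baseDelta (k₁ + n) x
  have hsum :
      (∑ q ∈ Icc 1 n, ((ascPochhammer ℚ q).eval (-(n : ℚ))
            * _root_.bernoulli (q + 1) / ((q + 1).factorial : ℚ))
          * (nmbpRev [k₁ + n - q]).eval (x + 1))
        - (∑ q ∈ Icc 1 n, ((ascPochhammer ℚ q).eval (-(n : ℚ))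
            * _root_.bernoulli (q + 1) / ((q + 1).factorial : ℚ))
          * (nmbpRev [k₁ + n - q]).eval x)
        = ((n : ℚ) + 1)⁻¹ * x ^ k₁
            * ∑ j ∈ range n,
                _root_.bernoulli (j + 2) * ((n + 1).choose (j + 2) : ℚ) * x ^ (n - 1 - j) := by
    rw [← Finset.sum_sub_distrib, Finset.mul_sum]
    rw [← Finset.Ico_add_one_right_eq_Icc, Finset.sum_Ico_eq_sum_range]
    refine Finset.sum_congr rfl fun j hj => ?_
    have hj' : j < n := mem_range.mp hj
    have hq1 : 1 ≤ 1 + j := by omega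
    have hq2 : 1 + j ≤ n := by omega
    rw [← mul_sub, baseDelta (k₁ + n - (1 + j)) x, coef_eq n (1 + j) hq1 hq2]
    have e1 : k₁ + n - (1 + j) = k₁ + (n - 1 - j) := by omega
    have e2 : 1 + j + 1 = j + 2 := by omega
    rw [e1, e2, pow_add]
    have hn : ((n : ℚ) + 1) ≠ 0 := by positivity
    field_simp
  rw [show (nmbpRev [n]).eval (x + 1)
      = -(((n : ℚ) + 1)⁻¹ * (x ^ (n + 1)
          + ∑ j ∈ range n,
            _root_.bernoulli (j + 2) * ((n + 1).choose (j + 2) : ℚ) * x ^ (n - 1 - j)))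
        - (1/2) * x ^ n from single_expand n x, nmbpRev]
  simp only [eval_add, eval_sub, eval_mul, eval_neg, eval_C, eval_finset_sum]
  linear_combination (-(((n : ℚ) + 1)⁻¹)) * hA - (1/2 : ℚ) * hB + hsum

open Finset in
theorem main_eval : ∀ (M : List ℕ) (k₁ : ℕ) (x : ℚ),
    (nmbpRev (M ++ [k₁])).eval (x + 1) - (nmbpRev (M ++ [k₁])).eval x
      = -(x ^ k₁) * (nmbpRev M).eval (x + 1)
  | [], k₁, x => by
    simpa [nmbpRev] using baseDelta k₁ x
  | [n], k₁, x => by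
    simpa using stepTwo n k₁ x
  | kr :: km :: rest, k₁, x => by
    have ihA := main_eval ((km + kr + 1) :: rest) k₁ x
    have ihB := main_eval ((km + kr) :: rest) k₁ x
    have hsum :
        (∑ q ∈ Icc 1 kr, ((ascPochhammer ℚ q).eval (-(kr : ℚ))
              * _root_.bernoulli (q + 1) / ((q + 1).factorial : ℚ))
            * (nmbpRev ((km + kr - q) :: (rest ++ [k₁]))).eval (x + 1))
          - (∑ q ∈ Icc 1 kr, ((ascPochhammer ℚ q).eval (-(kr : ℚ))
              * _root_.bernoulli (q + 1) / ((q + 1).factorial : ℚ))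
            * (nmbpRev ((km + kr - q) :: (rest ++ [k₁]))).eval x)
          = -(x ^ k₁) * ∑ q ∈ Icc 1 kr, ((ascPochhammer ℚ q).eval (-(kr : ℚ))
              * _root_.bernoulli (q + 1) / ((q + 1).factorial : ℚ))
            * (nmbpRev ((km + kr - q) :: rest)).eval (x + 1) := by
      rw [← Finset.sum_sub_distrib, Finset.mul_sum]
      refine Finset.sum_congr rfl fun q hq => ?_
      have ihq := main_eval ((km + kr - q) :: rest) k₁ x
      simp only [List.cons_append] at ihq
      rw [← mul_sub, ihq]
      ring
    simp only [List.cons_append] at ihA ihB ⊢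
    rw [nmbpRev, nmbpRev]
    simp only [eval_add, eval_sub, eval_mul, eval_neg, eval_C, eval_finset_sum]
    linear_combination (-(((kr : ℚ) + 1)⁻¹)) * ihA - (1/2 : ℚ) * ihB + hsum
  termination_by M => M.length
  decreasing_by all_goals simp


/-- The difference equation for the normalized multiple Bernoulli polynomials:
`ζ(−k₁,…,−k_r|z+1) − ζ(−k₁,…,−k_r|z) = −z^{k₁}·ζ(−k₂,…,−k_r|z+1)` in `ℚ[z]`. -/
theorem nmbp_difference_eq (k₁ : ℕ) (ks : List ℕ) :
    (nmbp (k₁ :: ks)).comp (X + 1) - nmbp (k₁ :: ks)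
      = -(X ^ k₁) * (nmbp ks).comp (X + 1) := by
  unfold nmbp
  rw [List.reverse_cons]
  apply Polynomial.funext
  intro x
  simp only [eval_sub, eval_mul, eval_comp, eval_add, eval_X, eval_one, eval_neg, eval_pow]
  exact main_eval ks.reverse k₁ x
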